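/- There is no morphism f on finite words over {1,2,3} with f(w) = w (w the Arshon sequence), |f(1)| + |f(2)| + |f(3)| > 3, and |f(1)| = 5. -/

import Mathlib

open List Filter

/-- Image of a letter in an odd (1-based) position under ψ. -/
def oddBlock : ℕ → List ℕ
  | 1 => [1, 2, 3]
  | 2 => [2, 3, 1]
  | 3 => [3, 1, 2]
  | _ => []

/-- Image of a letter in an even (1-based) position under ψ. -/
def evenBlock : ℕ → List ℕ
  | 1 => [3, 2, 1]
  | 2 => [1, 3, 2]
  | 3 => [2, 1, 3]
  | _ => []

/-- The Arshon map ψ: replace the letter at each odd (1-based) position by its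
`oddBlock`, and the letter at each even position by its `evenBlock`. -/
def psi (l : List ℕ) : List ℕ :=
  (((List.range l.length).zip l).map fun p => if p.1 % 2 = 0 then oddBlock p.2 else evenBlock p.2).flatten

/-- The Arshon sequence `w = lim ψ^k(1)` as an infinite word: since
`|ψ^[n+1] [1]| = 3^(n+1) > n`, the `n`-th letter (0-based) is well defined. -/
def arshon (n : ℕ) : ℕ := (psi^[n + 1] [1]).getD n 0

/-- A word over the alphabet {1,2,3}. -/
def Word123 (l : List ℕ) : Prop := ∀ a ∈ l, a = 1 ∨ a = 2 ∨ a = 3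

/-- A morphism on finite words over {1,2,3}. -/
def IsMorphism123 (f : List ℕ → List ℕ) : Prop :=
  (∀ u v, f (u ++ v) = f u ++ f v) ∧ ∀ l, Word123 l → Word123 (f l)

/-- `f(w) = w` where `w` is the infinite Arshon word: the image of every finite
prefix of `w` is again a prefix of `w`, and these images have unbounded length
(so that `f(w)` is genuinely the infinite word `w`). -/
def FixesArshon (f : List ℕ → List ℕ) : Prop :=
  (∀ n, f ((List.range n).map arshon)
      = (List.range (f ((List.range n).map arshon)).length).map arshon) ∧
  Tendsto (fun n => (f ((List.range n).map arshon)).length) atTop atTop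

/-- The infinite word `s` is obtained by iterating the morphism `f` on the
letter 1: `f(1)` begins with 1, `|f^k(1)| → ∞`, and `s = lim f^k(1)`. -/
def IterLimit (f : List ℕ → List ℕ) (s : ℕ → ℕ) : Prop :=
  (∃ t, f [1] = 1 :: t) ∧
  Tendsto (fun k => (f^[k] [1]).length) atTop atTop ∧
  ∀ k n, n < (f^[k] [1]).length → (f^[k] [1]).getD n 0 = s n

-- auxiliary recursive version of psi carrying the start index
def psiAux : ℕ → List ℕ → List ℕ
  | _, [] => []
  | k, a :: t => (if k % 2 = 0 then oddBlock a else evenBlock a) ++ psiAux (k + 1) t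

lemma psiAux_eq (l : List ℕ) : ∀ k : ℕ,
    (((List.range' k l.length).zip l).map fun p => if p.1 % 2 = 0 then oddBlock p.2 else evenBlock p.2).flatten
      = psiAux k l := by
  induction l with
  | nil => intro k; rfl
  | cons a t ih => intro k; simp [List.range'_succ, psiAux, ih]

lemma psi_eq (l : List ℕ) : psi l = psiAux 0 l := by
  rw [psi, List.range_eq_range', psiAux_eq]

lemma psiAux_append : ∀ (u t : List ℕ) (k : ℕ),
    psiAux k (u ++ t) = psiAux k u ++ psiAux (k + u.length) t := by
  intro u
  induction u with
  | nil => intro t k; simp [psiAux]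
  | cons a u ih => intro t k; simp [psiAux, ih, List.append_assoc]; ring_nf

lemma blk_length {a : ℕ} (ha : a = 1 ∨ a = 2 ∨ a = 3) (k : ℕ) :
    (if k % 2 = 0 then oddBlock a else evenBlock a).length = 3 := by
  rcases ha with rfl | rfl | rfl <;> split <;> rfl

lemma psiAux_getD : ∀ (l : List ℕ) (k q r : ℕ), Word123 l → q < l.length → r < 3 →
    (psiAux k l).getD (3 * q + r) 0
      = ((if (k + q) % 2 = 0 then oddBlock else evenBlock) (l.getD q 0)).getD r 0 := by
  intro l
  induction l with
  | nil => intro k q r _ hq; simp at hq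
  | cons a t ih =>
    intro k q r hW hq hr
    have ha : a = 1 ∨ a = 2 ∨ a = 3 := hW a (List.mem_cons_self)
    have hlen := blk_length ha k
    match q with
    | 0 =>
      rw [show (3 : ℕ) * 0 + r = r by ring]
      rw [psiAux, List.getD_append _ _ _ _ (by omega)]
      simp only [Nat.add_zero, List.getD_cons_zero]
      split <;> rename_i h <;> simp [h]
    | q + 1 =>
      rw [psiAux, List.getD_append_right _ _ _ _ (by omega)]
      rw [show 3 * (q + 1) + r - (if k % 2 = 0 then oddBlock a else evenBlock a).length
            = 3 * q + r by omega]
      rw [ih (k + 1) q r (fun x hx => hW x (List.mem_cons_of_mem a hx)) (by simpa using hq) hr]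
      rw [show k + 1 + q = k + (q + 1) by ring]
      simp

lemma word_psiAux : ∀ (l : List ℕ) (k : ℕ), Word123 l → Word123 (psiAux k l) := by
  intro l
  induction l with
  | nil => intro k _; intro x hx; simp [psiAux] at hx
  | cons a t ih =>
    intro k hW x hx
    rw [psiAux, List.mem_append] at hx
    rcases hx with hx | hx
    · rcases hW a (List.mem_cons_self) with rfl | rfl | rfl <;>
        revert hx <;> split <;> simp [oddBlock, evenBlock] <;> tauto
    · exact ih (k + 1) (fun y hy => hW y (List.mem_cons_of_mem a hy)) x hx

lemma word_psi {l : List ℕ} (h : Word123 l) : Word123 (psi l) := by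
  rw [psi_eq]; exact word_psiAux l 0 h

lemma len_psiAux : ∀ (l : List ℕ) (k : ℕ), Word123 l → (psiAux k l).length = 3 * l.length := by
  intro l
  induction l with
  | nil => intro k _; rfl
  | cons a t ih =>
    intro k hW
    rw [psiAux, List.length_append, blk_length (hW a (List.mem_cons_self)),
      ih (k + 1) (fun y hy => hW y (List.mem_cons_of_mem a hy))]
    simp; ring

lemma len_psi {l : List ℕ} (h : Word123 l) : (psi l).length = 3 * l.length := by
  rw [psi_eq]; exact len_psiAux l 0 h

lemma word_iter (k : ℕ) : Word123 (psi^[k] [1]) := by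
  induction k with
  | zero => intro x hx; simp at hx; tauto
  | succ k ih => rw [Function.iterate_succ_apply']; exact word_psi ih

lemma len_iter (k : ℕ) : (psi^[k] [1]).length = 3 ^ k := by
  induction k with
  | zero => rfl
  | succ k ih => rw [Function.iterate_succ_apply', len_psi (word_iter k), ih]; ring

lemma psi_prefix {u v : List ℕ} (h : u <+: v) : psi u <+: psi v := by
  obtain ⟨t, rfl⟩ := h
  rw [psi_eq, psi_eq, psiAux_append]
  exact ⟨_, rfl⟩

lemma iter_prefix_succ (k : ℕ) : psi^[k] [1] <+: psi^[k + 1] [1] := by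
  induction k with
  | zero => exact ⟨[2, 3], rfl⟩
  | succ k ih =>
    rw [Function.iterate_succ_apply', Function.iterate_succ_apply' psi (k + 1)]
    exact psi_prefix ih

lemma iter_prefix {m k : ℕ} (h : m ≤ k) : psi^[m] [1] <+: psi^[k] [1] := by
  induction k with
  | zero => simp_all
  | succ k ih =>
    rcases Nat.lt_or_ge m (k + 1) with h' | h'
    · exact (ih (by omega)).trans (iter_prefix_succ k)
    · have : m = k + 1 := by omega
      subst this; exact List.prefix_refl _

lemma getD_prefix {u v : List ℕ} (h : u <+: v) {n : ℕ} (hn : n < u.length) :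
    v.getD n 0 = u.getD n 0 := by
  obtain ⟨t, rfl⟩ := h
  exact List.getD_append _ _ _ _ hn

lemma arshon_lt {k n : ℕ} (h : n < 3 ^ k) : arshon n = (psi^[k] [1]).getD n 0 := by
  have hn1 : n < 3 ^ (n + 1) := by
    calc n < 3 ^ n := Nat.lt_pow_self (by norm_num)
    _ ≤ 3 ^ (n + 1) := Nat.pow_le_pow_right (by norm_num) (by omega)
  rcases Nat.le_total (n + 1) k with h' | h'
  · exact (getD_prefix (iter_prefix h') (by rw [len_iter]; exact hn1)).symm
  · exact getD_prefix (iter_prefix h') (by rw [len_iter]; exact h)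

lemma arshon_block (q r : ℕ) (hr : r < 3) :
    arshon (3 * q + r)
      = ((if q % 2 = 0 then oddBlock else evenBlock) (arshon q)).getD r 0 := by
  have hq : q < 3 ^ (q + 1) := by
    calc q < 3 ^ q := Nat.lt_pow_self (by norm_num)
    _ ≤ 3 ^ (q + 1) := Nat.pow_le_pow_right (by norm_num) (by omega)
  have h1 : arshon q = (psi^[q + 1] [1]).getD q 0 := arshon_lt hq
  have h2 : arshon (3 * q + r) = (psi^[q + 2] [1]).getD (3 * q + r) 0 := by
    apply arshon_lt
    have : 3 ^ (q + 2) = 3 * 3 ^ (q + 1) := by ring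
    omega
  rw [h2, show q + 2 = (q + 1) + 1 from rfl, Function.iterate_succ_apply', psi_eq,
    psiAux_getD _ 0 q r (word_iter (q + 1)) (by rw [len_iter]; exact hq) hr, h1]
  simp

lemma arshon_mem (n : ℕ) : arshon n = 1 ∨ arshon n = 2 ∨ arshon n = 3 := by
  have hn : n < (psi^[n + 1] [1]).length := by
    rw [len_iter]
    calc n < 3 ^ n := Nat.lt_pow_self (by norm_num)
    _ ≤ 3 ^ (n + 1) := Nat.pow_le_pow_right (by norm_num) (by omega)
  rw [arshon, List.getD_eq_getElem _ _ hn]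
  exact word_iter (n + 1) _ (List.getElem_mem _)

lemma occ_mod6 (p : ℕ) (h0 : arshon p = 1) (h1 : arshon (p + 1) = 2)
    (h2 : arshon (p + 2) = 3) (h3 : arshon (p + 3) = 1) (h4 : arshon (p + 4) = 3) :
    p % 6 = 0 ∨ p % 6 = 5 := by
  set q := p / 3 with hq
  have hp3 : p % 3 = 0 ∨ p % 3 = 1 ∨ p % 3 = 2 := by omega
  rcases hp3 with hr | hr | hr
  · -- p = 3q : block q = (1,2,3)
    have e0 : p = 3 * q + 0 := by omega
    have e1 : p + 1 = 3 * q + 1 := by omega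
    rw [e0] at h0; rw [e1] at h1
    rw [arshon_block q 0 (by norm_num)] at h0
    rw [arshon_block q 1 (by norm_num)] at h1
    rcases arshon_mem q with ha | ha | ha <;> rw [ha] at h0 h1 <;>
      rcases Nat.mod_two_eq_zero_or_one q with hpar | hpar <;>
      simp [hpar, oddBlock, evenBlock] at h0 h1 ⊢ <;> omega
  · -- p = 3q+1 : block q+1 = (3,1,3), impossible
    exfalso
    have e2 : p + 2 = 3 * (q + 1) + 0 := by omega
    have e3 : p + 3 = 3 * (q + 1) + 1 := by omega
    have e4 : p + 4 = 3 * (q + 1) + 2 := by omega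
    rw [e2] at h2; rw [e3] at h3; rw [e4] at h4
    rw [arshon_block (q + 1) 0 (by norm_num)] at h2
    rw [arshon_block (q + 1) 1 (by norm_num)] at h3
    rw [arshon_block (q + 1) 2 (by norm_num)] at h4
    rcases arshon_mem (q + 1) with ha | ha | ha <;> rw [ha] at h2 h3 h4 <;>
      rcases Nat.mod_two_eq_zero_or_one (q + 1) with hpar | hpar <;>
      simp [hpar, oddBlock, evenBlock] at h2 h3 h4
  · -- p = 3q+2 : block q+1 = (2,3,1), forces q+1 even
    have e1 : p + 1 = 3 * (q + 1) + 0 := by omega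
    have e2 : p + 2 = 3 * (q + 1) + 1 := by omega
    have e3 : p + 3 = 3 * (q + 1) + 2 := by omega
    rw [e1] at h1; rw [e2] at h2; rw [e3] at h3
    rw [arshon_block (q + 1) 0 (by norm_num)] at h1
    rw [arshon_block (q + 1) 1 (by norm_num)] at h2
    rw [arshon_block (q + 1) 2 (by norm_num)] at h3
    rcases arshon_mem (q + 1) with ha | ha | ha <;> rw [ha] at h1 h2 h3 <;>
      rcases Nat.mod_two_eq_zero_or_one (q + 1) with hpar | hpar <;>
      simp [hpar, oddBlock, evenBlock] at h1 h2 h3 ⊢ <;> omega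

def W27 : List ℕ :=
  [1,2,3,1,3,2,3,1,2,3,2,1,3,1,2,1,3,2,3,1,2,3,2,1,2,3,1]

lemma psi3 : psi^[3] [1] = W27 := by decide

lemma arshon_small {j : ℕ} (h : j < 27) : arshon j = W27.getD j 0 := by
  have h3 : (3 : ℕ) ^ 3 = 27 := by norm_num
  rw [arshon_lt (show j < 3 ^ 3 by omega), psi3]

lemma map_range_eq {g : ℕ → ℕ} {M : List ℕ} {n : ℕ} (hlen : M.length = n)
    (h : ∀ j, j < n → g j = M.getD j 0) : (List.range n).map g = M := by
  apply List.ext_getElem (by simp [hlen])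
  intro i h1 h2
  simp only [List.getElem_map, List.getElem_range]
  rw [h i (by simpa using h1), List.getD_eq_getElem _ _ h2]

lemma P27_eq : (List.range 27).map arshon = W27 := by
  refine map_range_eq ?_ ?_
  · rfl
  · intro j hj
    exact arshon_small hj

def W26 : List ℕ :=
  [1,2,3,1,3,2,3,1,2,3,2,1,3,1,2,1,3,2,3,1,2,3,2,1,2,3]

lemma P26_eq : (List.range 26).map arshon = W26 := by
  refine map_range_eq ?_ ?_
  · rfl
  intro j hj
  rw [arshon_small (by omega)]
  interval_cases j <;> rfl

set_option maxRecDepth 100000 in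
theorem arshon_no_fixing_morphism_length_eq_5_aux :
    ¬ ∃ f : List ℕ → List ℕ, IsMorphism123 f ∧ FixesArshon f ∧
      (f [1]).length + (f [2]).length + (f [3]).length > 3 ∧
      (f [1]).length = 5 := by
  rintro ⟨f, ⟨hadd, -⟩, ⟨hpref, -⟩, -, h5⟩
  -- f on cons
  have f_cons : ∀ (a : ℕ) (t : List ℕ), f (a :: t) = f [a] ++ f t := fun a t => hadd [a] t
  -- f [1] = [1,2,3,1,3]
  have hone : f [1] = [1, 2, 3, 1, 3] := by
    have h1 := hpref 1
    have e1 : (List.range 1).map arshon = [1] := by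
      simp [List.range_succ, arshon_small (show 0 < 27 by norm_num), W27]
    rw [e1] at h1
    rw [h1, h5]
    refine map_range_eq ?_ ?_
    · rfl
    intro j hj
    rw [arshon_small (by omega)]
    interval_cases j <;> rfl
  -- the image of the 26-prefix
  set B := (f ((List.range 26).map arshon)).length with hB
  have h26 := hpref 26
  have h27 := hpref 27
  have hsplit : (List.range 27).map arshon = (List.range 26).map arshon ++ [1] := by
    rw [P27_eq, P26_eq]; rfl
  have himg : (List.range B).map arshon ++ [1, 2, 3, 1, 3]
      = (List.range (B + 5)).map arshon := by
    have : f ((List.range 27).map arshon) = (List.range B).map arshon ++ [1, 2, 3, 1, 3] := by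
      rw [hsplit, hadd, hone, ← h26]
    have hlen2 : (f ((List.range 27).map arshon)).length = B + 5 := by
      rw [this]; simp
    rw [← this, h27, hlen2]
  -- occurrence of 12313 at position B
  have hval : ∀ j, j < 5 → arshon (B + j) = [1, 2, 3, 1, 3].getD j 0 := by
    intro j hj
    have h2' : ((List.range B).map arshon ++ [1, 2, 3, 1, 3]).getD (B + j) 0
        = [1, 2, 3, 1, 3].getD j 0 := by
      rw [List.getD_append_right _ _ _ _ (by simp)]
      congr 1
      simp
    have h1' : ((List.range (B + 5)).map arshon).getD (B + j) 0 = arshon (B + j) := by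
      rw [List.getD_eq_getElem _ _ (by simp; omega)]
      simp
    rw [← h1', ← himg, h2']
  have hocc : B % 6 = 0 ∨ B % 6 = 5 := by
    apply occ_mod6 B
    · have := hval 0 (by norm_num); simpa using this
    · exact hval 1 (by norm_num)
    · exact hval 2 (by norm_num)
    · exact hval 3 (by norm_num)
    · exact hval 4 (by norm_num)
  -- compute B
  have hnil : f [] = [] := by
    have := hadd [] []
    simp at this
    exact this
  have len_f : ∀ l : List ℕ, (f l).length = (l.map fun a => (f [a]).length).sum := by
    intro l
    induction l with
    | nil => simp [hnil]
    | cons a t ih => rw [f_cons, List.length_append, ih]; simp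
  have hBeq : B = 40 + 9 * (f [2]).length + 9 * (f [3]).length := by
    rw [hB, P26_eq, len_f]
    simp only [W26, List.map_cons, List.map_nil, List.sum_cons, List.sum_nil]
    rw [h5]; ring
  omega

/-- There is no morphism `f` with `f(w) = w`, `|f(1)|+|f(2)|+|f(3)| > 3`
and `|f(1)| = 5`. -/
theorem arshon_no_fixing_morphism_length_eq_5 :
    ¬ ∃ f : List ℕ → List ℕ, IsMorphism123 f ∧ FixesArshon f ∧
      (f [1]).length + (f [2]).length + (f [3]).length > 3 ∧
      (f [1]).length = 5 :=
  arshon_no_fixing_morphism_length_eq_5_aux
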